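/- There is an absolute constant c > 0 such that for every odd prime p and all f₁, f₂ : F_p → ℂ, ( Σ_{s ∈ F_p} | Σ_{n ∈ F_p, n ≠ 0} f̂₁(s − n) · f̂₂(n) · K(s − n, n) |² )^(1/2) ≤ c · p^(2/5) · ‖f₁‖₂ · ‖f₂‖₂, where K(x, y) = e_p(−x² · (4y)^{−1}) for y ≠ 0 and K(x, 0) = 0. -/

import Mathlib

open Finset

set_option linter.unusedSectionVars false

/-- `e_p(x) = exp(2πi x / p)` for `x : ZMod p`. -/
noncomputable def ep (p : ℕ) [NeZero p] (x : ZMod p) : ℂ :=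
  Complex.exp (2 * (Real.pi : ℂ) * Complex.I * (x.val : ℂ) / (p : ℂ))

/-- Normalized L²-norm. -/
noncomputable def nrm2 (p : ℕ) [NeZero p] (f : ZMod p → ℂ) : ℝ :=
  Real.sqrt ((1 / (p : ℝ)) * ∑ x : ZMod p, ‖f x‖ ^ 2)

/-- Fourier transform `f̂(z) = (1/p) Σ_x e_p(-xz) f(x)`. -/
noncomputable def ft (p : ℕ) [NeZero p] (f : ZMod p → ℂ) (z : ZMod p) : ℂ :=
  (1 / (p : ℂ)) * ∑ x : ZMod p, ep p (-(x * z)) * f x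

/-- The quadratic kernel `K(x,y) = e_p(-x²(4y)⁻¹)` for `y ≠ 0`, `0` otherwise. -/
noncomputable def Kq (p : ℕ) [NeZero p] (x y : ZMod p) : ℂ :=
  if y = 0 then 0 else ep p (-(x ^ 2 * (4 * y)⁻¹))


section basics
variable {p : ℕ} [NeZero p]

noncomputable def zet (p : ℕ) : ℂ := Complex.exp (2 * (Real.pi : ℂ) * Complex.I / (p : ℂ))

lemma zet_pow_p : zet p ^ p = 1 := by
  rw [zet, ← Complex.exp_nat_mul]
  rw [mul_div_assoc, mul_comm (p:ℂ), mul_assoc, div_mul_cancel₀]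
  · exact Complex.exp_two_pi_mul_I
  · exact_mod_cast (NeZero.ne p)

lemma ep_eq_pow (x : ZMod p) : ep p x = zet p ^ x.val := by
  rw [ep, zet, ← Complex.exp_nat_mul]
  ring_nf

lemma zet_pow_mod (a : ℕ) : zet p ^ (a % p) = zet p ^ a := by
  conv_rhs => rw [← Nat.div_add_mod a p, pow_add, pow_mul, zet_pow_p, one_pow, one_mul]

lemma ep_add (x y : ZMod p) : ep p (x + y) = ep p x * ep p y := by
  rw [ep_eq_pow, ep_eq_pow, ep_eq_pow, ← pow_add, ZMod.val_add, zet_pow_mod]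

lemma ep_zero : ep p 0 = 1 := by
  simp [ep]

lemma abs_ep (x : ZMod p) : ‖ep p x‖ = 1 := by
  rw [ep, Complex.norm_exp]
  have : (2 * (Real.pi : ℂ) * Complex.I * (x.val : ℂ) / (p : ℂ)).re = 0 := by
    rw [show (2 * (Real.pi : ℂ) * Complex.I * (x.val : ℂ) / (p : ℂ))
        = ((2 * Real.pi * (x.val:ℝ) / p : ℝ)) * Complex.I by push_cast; ring]
    simp
  rw [this, Real.exp_zero]

lemma ep_ne_zero (x : ZMod p) : ep p x ≠ 0 := by
  intro h
  have := abs_ep (p := p) x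
  rw [h] at this; simp at this

lemma conj_ep (x : ZMod p) : (starRingEnd ℂ) (ep p x) = ep p (-x) := by
  have h1 : ep p x * ep p (-x) = 1 := by rw [← ep_add]; simp [ep_zero]
  have h2 : ep p x * (starRingEnd ℂ) (ep p x) = 1 := by
    rw [Complex.mul_conj]
    rw [Complex.normSq_eq_norm_sq, abs_ep]; norm_num
  exact mul_left_cancel₀ (ep_ne_zero x) (h2.trans h1.symm)

lemma ep_sub (x y : ZMod p) : ep p (x - y) = ep p x * ep p (-y) := by
  rw [sub_eq_add_neg, ep_add]

end basics

section ortho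
variable {p : ℕ} [hp : Fact p.Prime]

lemma zet_ne_one (hp2 : 1 < p) : zet p ≠ (1:ℂ) := by
  intro h
  rw [zet, Complex.exp_eq_one_iff] at h
  obtain ⟨n, hn⟩ := h
  have hne : (2 * (Real.pi:ℂ) * Complex.I) ≠ 0 := by
    refine mul_ne_zero (mul_ne_zero two_ne_zero ?_) Complex.I_ne_zero
    exact_mod_cast Real.pi_ne_zero
  have hp0 : (p:ℂ) ≠ 0 := Nat.cast_ne_zero.mpr (by omega)
  field_simp at hn
  have h2 : (2 * (Real.pi:ℂ) * Complex.I) * 1 = (2 * (Real.pi:ℂ) * Complex.I) * (n * p) := by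
    linear_combination (2 * (Real.pi:ℂ) * Complex.I) * hn
  have h3 : (1:ℂ) = (n:ℂ) * (p:ℂ) := mul_left_cancel₀ hne h2
  have h4 : (1:ℤ) = n * (p:ℤ) := by exact_mod_cast h3
  have hpz : (2:ℤ) ≤ (p:ℤ) := by exact_mod_cast hp2
  have hdvd : (p:ℤ) ∣ 1 := ⟨n, by linarith [h4]⟩
  have := Int.le_of_dvd one_pos hdvd
  linarith

lemma sum_ep_eq_zero : ∑ t : ZMod p, ep p t = 0 := by
  have h1 : ∑ t : ZMod p, ep p t = ∑ k ∈ range p, zet p ^ k := by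
    rw [Finset.sum_bij (fun (t : ZMod p) _ => t.val)]
    · intro a _; exact mem_range.mpr (ZMod.val_lt a)
    · intro a _ b _ h; exact ZMod.val_injective p h
    · intro b hb
      refine ⟨(b : ZMod p), mem_univ _, ?_⟩
      rw [ZMod.val_natCast_of_lt (mem_range.mp hb)]
    · intro a _; exact ep_eq_pow a
  rw [h1, geom_sum_eq (zet_ne_one hp.out.one_lt), zet_pow_p, sub_self, zero_div]

lemma sum_ep_mul_eq_zero {c : ZMod p} (hc : c ≠ 0) : ∑ t : ZMod p, ep p (c * t) = 0 := by
  have := Fact.out (p := p.Prime)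
  have : ∑ t : ZMod p, ep p (c * t) = ∑ t : ZMod p, ep p t := by
    apply Fintype.sum_equiv (Equiv.mulLeft₀ c hc)
    intro t; simp [Equiv.mulLeft₀]
  rw [this, sum_ep_eq_zero]

lemma sum_ep_ite (c : ZMod p) : ∑ t : ZMod p, ep p (c * t) = if c = 0 then (p:ℂ) else 0 := by
  split_ifs with h
  · subst h; simp [ep_zero, ZMod.card]
  · exact sum_ep_mul_eq_zero h

end ortho

section parseval
variable {p : ℕ} [hp : Fact p.Prime]

lemma parseval_c (F : ZMod p → ℂ) :
    ∑ d : ZMod p, (∑ x : ZMod p, F x * ep p (x*d)) * (starRingEnd ℂ) (∑ x : ZMod p, F x * ep p (x*d))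
      = (p:ℂ) * ∑ x : ZMod p, F x * (starRingEnd ℂ) (F x) := by
  have key : ∀ d : ZMod p, (∑ x : ZMod p, F x * ep p (x*d)) * (starRingEnd ℂ) (∑ x : ZMod p, F x * ep p (x*d))
      = ∑ x : ZMod p, ∑ y : ZMod p, F x * (starRingEnd ℂ) (F y) * ep p ((x - y) * d) := by
    intro d
    rw [map_sum, Finset.sum_mul_sum]
    apply Finset.sum_congr rfl; intro x _
    apply Finset.sum_congr rfl; intro y _
    rw [map_mul, conj_ep, show (x - y) * d = x*d + -(y*d) by ring, ep_add]
    ring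
  simp_rw [key]
  rw [Finset.sum_comm]
  have inner : ∀ x : ZMod p, ∑ d : ZMod p, ∑ y : ZMod p, F x * (starRingEnd ℂ) (F y) * ep p ((x - y) * d)
      = (p:ℂ) * (F x * (starRingEnd ℂ) (F x)) := by
    intro x
    rw [Finset.sum_comm]
    have : ∀ y : ZMod p, ∑ d : ZMod p, F x * (starRingEnd ℂ) (F y) * ep p ((x - y) * d)
        = F x * (starRingEnd ℂ) (F y) * (if x - y = 0 then (p:ℂ) else 0) := by
      intro y
      rw [← Finset.mul_sum, sum_ep_ite]
    simp_rw [this, sub_eq_zero]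
    rw [Finset.sum_eq_single x]
    · simp [mul_comm]
    · intro y _ hy
      rw [if_neg (fun h => hy h.symm)]
      ring
    · intro h; exact absurd (mem_univ x) h
  simp_rw [inner]
  rw [← Finset.mul_sum]

lemma two_ne_zero'' (hp2 : p ≠ 2) : (2 : ZMod p) ≠ 0 := by
  intro h
  have : ((2:ℕ) : ZMod p) = 0 := by exact_mod_cast h
  rw [ZMod.natCast_eq_zero_iff] at this
  have := (Nat.prime_dvd_prime_iff_eq hp.out Nat.prime_two).mp this
  exact hp2 this

lemma gauss_sq (hp2 : p ≠ 2) {q : ZMod p} (l : ZMod p) (hq : q ≠ 0) :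
    (∑ w : ZMod p, ep p (q*w^2 + l*w)) * (starRingEnd ℂ) (∑ w : ZMod p, ep p (q*w^2 + l*w))
      = (p:ℂ) := by
  rw [map_sum, Finset.sum_mul_sum]
  simp_rw [conj_ep, ← ep_add]
  rw [Finset.sum_comm]
  have reidx : ∀ w' : ZMod p, ∑ w : ZMod p, ep p ((q*w^2+l*w) + -(q*w'^2+l*w'))
      = ∑ h : ZMod p, ep p ((q*h^2 + l*h) + (2*q*h)*w') := by
    intro w'
    refine (Fintype.sum_equiv (Equiv.addRight w') _ _ ?_).symm
    intro h
    congr 1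
    simp only [Equiv.coe_addRight]
    ring
  simp_rw [reidx]
  rw [Finset.sum_comm]
  have inner : ∀ h : ZMod p, ∑ w' : ZMod p, ep p ((q*h^2 + l*h) + (2*q*h)*w')
      = ep p (q*h^2 + l*h) * (if 2*q*h = 0 then (p:ℂ) else 0) := by
    intro h
    simp_rw [ep_add, ← Finset.mul_sum, sum_ep_ite]
  simp_rw [inner]
  rw [Finset.sum_eq_single 0]
  · simp [ep_zero]
  · intro h _ hh
    rw [if_neg, mul_zero]
    exact mul_ne_zero (mul_ne_zero (two_ne_zero'' hp2) hq) hh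
  · intro h; exact absurd (mem_univ 0) h

end parseval

section gauss2
variable {p : ℕ} [hp : Fact p.Prime]

lemma abs_gauss (hp2 : p ≠ 2) {q : ZMod p} (l : ZMod p) (hq : q ≠ 0) :
    ‖∑ w : ZMod p, ep p (q*w^2 + l*w)‖ = Real.sqrt p := by
  have h := gauss_sq hp2 l hq
  rw [Complex.mul_conj] at h
  have h2 : Complex.normSq (∑ w : ZMod p, ep p (q*w^2 + l*w)) = (p:ℝ) := by exact_mod_cast h
  rw [← Complex.sq_norm] at h2
  rw [← h2, Real.sqrt_sq (norm_nonneg _)]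

noncomputable def gS (p : ℕ) [NeZero p] (α : ZMod p) : ℂ := ∑ s : ZMod p, ep p (α * s^2)

lemma abs_gS (hp2 : p ≠ 2) {α : ZMod p} (hα : α ≠ 0) : ‖gS p α‖ = Real.sqrt p := by
  have := abs_gauss hp2 (0 : ZMod p) hα
  simp only [zero_mul, add_zero] at this
  rw [gS]
  exact this

lemma complete_sq (hp2 : p ≠ 2) {α : ZMod p} (β δ : ZMod p) (hα : α ≠ 0) :
    ∑ s : ZMod p, ep p (α*s^2 + β*s + δ) = ep p (δ - β^2 * (4*α)⁻¹) * gS p α := by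
  have h2 : (2 : ZMod p) ≠ 0 := two_ne_zero'' hp2
  have h4 : (4 : ZMod p) ≠ 0 := by
    intro h
    have : (2 : ZMod p) * 2 = 0 := by rw [← h]; norm_num
    rcases mul_eq_zero.mp this with h' | h' <;> exact h2 h'
  set c : ZMod p := β * (2*α)⁻¹ with hc
  have step : ∑ s : ZMod p, ep p (α*s^2 + β*s + δ)
      = ∑ t : ZMod p, ep p (α*(t-c)^2 + β*(t-c) + δ) := by
    refine (Fintype.sum_equiv (Equiv.subRight c) _ _ ?_).symm
    intro t; rfl
  rw [step]
  have key : ∀ t : ZMod p, α*(t-c)^2 + β*(t-c) + δ = α*t^2 + (δ - β^2 * (4*α)⁻¹) := by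
    intro t
    rw [hc]
    field_simp
    ring
  simp_rw [key, ep_add, gS, ← Finset.sum_mul]
  ring
end gauss2


section assembly
variable {p : ℕ} [hp : Fact p.Prime]

noncomputable def Tq (p : ℕ) [NeZero p] (f₁ : ZMod p → ℂ) (n m : ZMod p) : ℂ :=
  ∑ s : ZMod p, (ft p f₁ (s-n) * Kq p (s-n) n) * (starRingEnd ℂ) (ft p f₁ (s-m) * Kq p (s-m) m)

lemma step1 (f₁ f₂ : ZMod p → ℂ) :
    ∑ s : ZMod p, (∑ n ∈ univ.filter (fun n : ZMod p => n ≠ 0), ft p f₁ (s - n) * ft p f₂ n * Kq p (s - n) n) *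
      (starRingEnd ℂ) (∑ n ∈ univ.filter (fun n : ZMod p => n ≠ 0), ft p f₁ (s - n) * ft p f₂ n * Kq p (s - n) n)
    = ∑ n ∈ univ.filter (fun n : ZMod p => n ≠ 0), ∑ m ∈ univ.filter (fun m : ZMod p => m ≠ 0),
        (ft p f₂ n * (starRingEnd ℂ) (ft p f₂ m)) * Tq p f₁ n m := by
  have key : ∀ s : ZMod p,
      (∑ n ∈ univ.filter (fun n : ZMod p => n ≠ 0), ft p f₁ (s - n) * ft p f₂ n * Kq p (s - n) n) *
      (starRingEnd ℂ) (∑ n ∈ univ.filter (fun n : ZMod p => n ≠ 0), ft p f₁ (s - n) * ft p f₂ n * Kq p (s - n) n)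
      = ∑ n ∈ univ.filter (fun n : ZMod p => n ≠ 0), ∑ m ∈ univ.filter (fun m : ZMod p => m ≠ 0),
          (ft p f₂ n * (starRingEnd ℂ) (ft p f₂ m)) *
          ((ft p f₁ (s-n) * Kq p (s-n) n) * (starRingEnd ℂ) (ft p f₁ (s-m) * Kq p (s-m) m)) := by
    intro s
    rw [map_sum, Finset.sum_mul_sum]
    apply Finset.sum_congr rfl; intro n _
    apply Finset.sum_congr rfl; intro m _
    simp only [map_mul]
    ring
  simp_rw [key]
  rw [Finset.sum_comm]
  apply Finset.sum_congr rfl; intro n _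
  rw [Finset.sum_comm]
  apply Finset.sum_congr rfl; intro m _
  rw [Tq, ← Finset.mul_sum]

end assembly

section assembly2
variable {p : ℕ} [hp : Fact p.Prime]

lemma ep_mul_conj_self (z : ZMod p) : ep p z * (starRingEnd ℂ) (ep p z) = 1 := by
  rw [conj_ep, ← ep_add, add_neg_cancel, ep_zero]

lemma diag_eval (f₁ : ZMod p → ℂ) {n : ZMod p} (hn : n ≠ 0) :
    Tq p f₁ n n = ∑ u : ZMod p, ft p f₁ u * (starRingEnd ℂ) (ft p f₁ u) := by
  rw [Tq]
  have key : ∀ s : ZMod p, (ft p f₁ (s-n) * Kq p (s-n) n) * (starRingEnd ℂ) (ft p f₁ (s-n) * Kq p (s-n) n)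
      = ft p f₁ (s-n) * (starRingEnd ℂ) (ft p f₁ (s-n)) := by
    intro s
    rw [Kq, if_neg hn, map_mul]
    have := ep_mul_conj_self (p := p) (-((s-n) ^ 2 * (4 * n)⁻¹))
    calc ft p f₁ (s-n) * ep p (-((s-n) ^ 2 * (4 * n)⁻¹)) *
        ((starRingEnd ℂ) (ft p f₁ (s-n)) * (starRingEnd ℂ) (ep p (-((s-n) ^ 2 * (4 * n)⁻¹))))
        = (ft p f₁ (s-n) * (starRingEnd ℂ) (ft p f₁ (s-n))) *
          (ep p (-((s-n) ^ 2 * (4 * n)⁻¹)) * (starRingEnd ℂ) (ep p (-((s-n) ^ 2 * (4 * n)⁻¹)))) := by ring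
      _ = _ := by rw [this, mul_one]
  simp_rw [key]
  exact Fintype.sum_equiv (Equiv.subRight n) _ _ (fun s => rfl)

end assembly2

section assembly3
variable {p : ℕ} [hp : Fact p.Prime]

lemma four_ne_zero'' (hp2 : p ≠ 2) : (4 : ZMod p) ≠ 0 := by
  intro h
  have : (2 : ZMod p) * 2 = 0 := by rw [← h]; norm_num
  rcases mul_eq_zero.mp this with h' | h' <;> exact two_ne_zero'' hp2 h'

lemma conj_ft (f : ZMod p → ℂ) (z : ZMod p) :
    (starRingEnd ℂ) (ft p f z) = (1 / (p:ℂ)) * ∑ y : ZMod p, ep p (y * z) * (starRingEnd ℂ) (f y) := by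
  rw [ft, map_mul, map_sum]
  congr 1
  · rw [map_div₀, map_one, Complex.conj_natCast]
  · apply Finset.sum_congr rfl; intro y _
    rw [map_mul, conj_ep, neg_neg]

lemma off_eval (hp2 : p ≠ 2) (f₁ : ZMod p → ℂ) {n m : ZMod p} (hn : n ≠ 0) (hm : m ≠ 0)
    (hnm : n ≠ m) :
    Tq p f₁ n m = (1/(p:ℂ))^2 * ∑ x : ZMod p, ∑ y : ZMod p, f₁ x * (starRingEnd ℂ) (f₁ y) *
      (gS p ((n-m)*(4*n*m)⁻¹) *
        ep p (x*n - y*m - (n-m)*4⁻¹ - (x-y)^2*(n*m*(n-m)⁻¹))) := by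
  have h4 : (4 : ZMod p) ≠ 0 := four_ne_zero'' hp2
  have hd : n - m ≠ 0 := sub_ne_zero.mpr hnm
  have hα : (n-m)*(4*n*m)⁻¹ ≠ 0 := by
    apply mul_ne_zero hd
    apply inv_ne_zero
    exact mul_ne_zero (mul_ne_zero h4 hn) hm
  have key1 : ∀ s : ZMod p, (ft p f₁ (s-n) * Kq p (s-n) n) * (starRingEnd ℂ) (ft p f₁ (s-m) * Kq p (s-m) m)
      = (1/(p:ℂ))^2 * ∑ x : ZMod p, ∑ y : ZMod p, f₁ x * (starRingEnd ℂ) (f₁ y) *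
          ep p (-(x*(s-n)) + y*(s-m) + -((s-n)^2*(4*n)⁻¹) + (s-m)^2*(4*m)⁻¹) := by
    intro s
    rw [Kq, Kq, if_neg hn, if_neg hm, map_mul, conj_ep, neg_neg, ft, conj_ft]
    rw [show ((1 / (p:ℂ)) * ∑ x : ZMod p, ep p (-(x * (s-n))) * f₁ x) * ep p (-((s-n) ^ 2 * (4 * n)⁻¹)) *
        (((1 / (p:ℂ)) * ∑ y : ZMod p, ep p (y * (s-m)) * (starRingEnd ℂ) (f₁ y)) * ep p ((s-m) ^ 2 * (4 * m)⁻¹))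
        = (1/(p:ℂ))^2 * (((∑ x : ZMod p, ep p (-(x * (s-n))) * f₁ x) * ∑ y : ZMod p, ep p (y * (s-m)) * (starRingEnd ℂ) (f₁ y)) *
            (ep p (-((s-n) ^ 2 * (4 * n)⁻¹)) * ep p ((s-m) ^ 2 * (4 * m)⁻¹))) from by ring]
    congr 1
    rw [Finset.sum_mul_sum, Finset.sum_mul]
    apply Finset.sum_congr rfl; intro x _
    rw [Finset.sum_mul]
    apply Finset.sum_congr rfl; intro y _
    rw [show (-(x*(s-n)) + y*(s-m) + -((s-n)^2*(4*n)⁻¹) + (s-m)^2*(4*m)⁻¹)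
        = (-(x*(s-n)) + y*(s-m)) + (-((s-n)^2*(4*n)⁻¹) + (s-m)^2*(4*m)⁻¹) from by ring,
      ep_add, ep_add, ep_add]
    ring
  rw [Tq]
  simp_rw [key1]
  rw [← Finset.mul_sum]
  congr 1
  rw [Finset.sum_comm]
  apply Finset.sum_congr rfl; intro x _
  rw [Finset.sum_comm]
  apply Finset.sum_congr rfl; intro y _
  rw [← Finset.mul_sum]
  congr 1
  have quad : ∀ s : ZMod p, (-(x*(s-n)) + y*(s-m) + -((s-n)^2*(4*n)⁻¹) + (s-m)^2*(4*m)⁻¹)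
      = ((n-m)*(4*n*m)⁻¹)*s^2 + (y-x)*s + (x*n - y*m - (n-m)*4⁻¹) := by
    intro s
    field_simp
    ring
  simp_rw [quad]
  rw [complete_sq hp2 _ _ hα]
  rw [show (x*n - y*m - (n-m)*4⁻¹) - (y-x)^2 * (4*((n-m)*(4*n*m)⁻¹))⁻¹
      = x*n - y*m - (n-m)*4⁻¹ - (x-y)^2*(n*m*(n-m)⁻¹) from by field_simp; ring]
  ring
end assembly3

noncomputable def Dd (p : ℕ) [NeZero p] (f₁ : ZMod p → ℂ) (d w : ZMod p) : ℂ :=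
  ∑ x : ZMod p, f₁ x * (starRingEnd ℂ) (f₁ (x - w)) * ep p (x * d)

noncomputable def Md (p : ℕ) [NeZero p] (B : ZMod p → ℂ) (d w : ZMod p) : ℂ :=
  ∑ m ∈ univ.filter (fun m : ZMod p => m ≠ 0 ∧ m + d ≠ 0),
    B (m+d) * (starRingEnd ℂ) (B m) * gS p (d * (4*(m+d)*m)⁻¹) * ep p (w*m - w^2*((m+d)*m*d⁻¹))

section assembly4
variable {p : ℕ} [hp : Fact p.Prime]

lemma inner_d (hp2 : p ≠ 2) (f₁ B : ZMod p → ℂ) {d : ZMod p} (hd : d ≠ 0) :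
    ∑ m ∈ univ.filter (fun m : ZMod p => m ≠ 0 ∧ m + d ≠ 0),
        (B (m+d) * (starRingEnd ℂ) (B m)) * Tq p f₁ (m+d) m
    = (1/(p:ℂ))^2 * (ep p (-(d*4⁻¹)) * ∑ w : ZMod p, Dd p f₁ d w * Md p B d w) := by
  have hTq : ∀ m ∈ univ.filter (fun m : ZMod p => m ≠ 0 ∧ m + d ≠ 0),
      (B (m+d) * (starRingEnd ℂ) (B m)) * Tq p f₁ (m+d) m
      = ∑ x : ZMod p, ∑ w : ZMod p,
          (1/(p:ℂ))^2 * (ep p (-(d*4⁻¹)) * ((f₁ x * (starRingEnd ℂ) (f₁ (x - w)) * ep p (x*d)) *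
            (B (m+d) * (starRingEnd ℂ) (B m) * gS p (d*(4*(m+d)*m)⁻¹) *
              ep p (w*m - w^2*((m+d)*m*d⁻¹))))) := by
    intro m hm
    obtain ⟨hm0, hmd⟩ := (Finset.mem_filter.mp hm).2
    have hnm : m + d ≠ m := fun h => hd (by rwa [add_eq_left] at h)
    rw [off_eval hp2 f₁ hmd hm0 hnm, add_sub_cancel_left]
    simp only [Finset.mul_sum]
    apply Finset.sum_congr rfl; intro x _
    refine (Fintype.sum_equiv (Equiv.subLeft x) _ _ ?_).symm
    intro w
    simp only [Equiv.subLeft_apply]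
    rw [show x*(m+d) - (x-w)*m - d*4⁻¹ - (x-(x-w))^2*((m+d)*m*d⁻¹)
        = -(d*4⁻¹) + x*d + (w*m - w^2*((m+d)*m*d⁻¹)) from by ring, ep_add, ep_add]
    ring
  rw [Finset.sum_congr rfl hTq]
  rw [show (1/(p:ℂ))^2 * (ep p (-(d*4⁻¹)) * ∑ w : ZMod p, Dd p f₁ d w * Md p B d w)
      = ∑ w : ZMod p, (1/(p:ℂ))^2 * (ep p (-(d*4⁻¹)) * (Dd p f₁ d w * Md p B d w)) from by
    rw [Finset.mul_sum, Finset.mul_sum]]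
  have expand : ∀ w : ZMod p, (1/(p:ℂ))^2 * (ep p (-(d*4⁻¹)) * (Dd p f₁ d w * Md p B d w))
      = ∑ x : ZMod p, ∑ m ∈ univ.filter (fun m : ZMod p => m ≠ 0 ∧ m + d ≠ 0),
          (1/(p:ℂ))^2 * (ep p (-(d*4⁻¹)) * ((f₁ x * (starRingEnd ℂ) (f₁ (x - w)) * ep p (x*d)) *
            (B (m+d) * (starRingEnd ℂ) (B m) * gS p (d*(4*(m+d)*m)⁻¹) *
              ep p (w*m - w^2*((m+d)*m*d⁻¹))))) := by
    intro w
    rw [Dd, Md, Finset.sum_mul_sum]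
    simp only [Finset.mul_sum]
  simp_rw [expand]
  calc ∑ m ∈ univ.filter (fun m : ZMod p => m ≠ 0 ∧ m + d ≠ 0), ∑ x : ZMod p, ∑ w : ZMod p,
          (1/(p:ℂ))^2 * (ep p (-(d*4⁻¹)) * ((f₁ x * (starRingEnd ℂ) (f₁ (x - w)) * ep p (x*d)) *
            (B (m+d) * (starRingEnd ℂ) (B m) * gS p (d*(4*(m+d)*m)⁻¹) *
              ep p (w*m - w^2*((m+d)*m*d⁻¹)))))
      = ∑ x : ZMod p, ∑ m ∈ univ.filter (fun m : ZMod p => m ≠ 0 ∧ m + d ≠ 0), ∑ w : ZMod p,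
          (1/(p:ℂ))^2 * (ep p (-(d*4⁻¹)) * ((f₁ x * (starRingEnd ℂ) (f₁ (x - w)) * ep p (x*d)) *
            (B (m+d) * (starRingEnd ℂ) (B m) * gS p (d*(4*(m+d)*m)⁻¹) *
              ep p (w*m - w^2*((m+d)*m*d⁻¹))))) := Finset.sum_comm
    _ = ∑ x : ZMod p, ∑ w : ZMod p, ∑ m ∈ univ.filter (fun m : ZMod p => m ≠ 0 ∧ m + d ≠ 0),
          (1/(p:ℂ))^2 * (ep p (-(d*4⁻¹)) * ((f₁ x * (starRingEnd ℂ) (f₁ (x - w)) * ep p (x*d)) *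
            (B (m+d) * (starRingEnd ℂ) (B m) * gS p (d*(4*(m+d)*m)⁻¹) *
              ep p (w*m - w^2*((m+d)*m*d⁻¹))))) :=
        Finset.sum_congr rfl (fun x _ => Finset.sum_comm)
    _ = ∑ w : ZMod p, ∑ x : ZMod p, ∑ m ∈ univ.filter (fun m : ZMod p => m ≠ 0 ∧ m + d ≠ 0),
          (1/(p:ℂ))^2 * (ep p (-(d*4⁻¹)) * ((f₁ x * (starRingEnd ℂ) (f₁ (x - w)) * ep p (x*d)) *
            (B (m+d) * (starRingEnd ℂ) (B m) * gS p (d*(4*(m+d)*m)⁻¹) *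
              ep p (w*m - w^2*((m+d)*m*d⁻¹))))) := Finset.sum_comm
end assembly4

section assembly5
variable {p : ℕ} [hp : Fact p.Prime]

lemma reindex_pairs (F : ZMod p → ZMod p → ℂ) :
    ∑ n ∈ univ.filter (fun n : ZMod p => n ≠ 0),
      ∑ m ∈ (univ.filter (fun m : ZMod p => m ≠ 0)).erase n, F n m
    = ∑ d ∈ univ.filter (fun d : ZMod p => d ≠ 0),
        ∑ m ∈ univ.filter (fun m : ZMod p => m ≠ 0 ∧ m + d ≠ 0), F (m+d) m := by
  have lhs_eq : ∑ n ∈ univ.filter (fun n : ZMod p => n ≠ 0),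
      ∑ m ∈ (univ.filter (fun m : ZMod p => m ≠ 0)).erase n, F n m
      = ∑ n : ZMod p, ∑ m : ZMod p, (if n ≠ 0 ∧ m ≠ 0 ∧ m ≠ n then F n m else 0) := by
    rw [Finset.sum_filter]
    apply Finset.sum_congr rfl; intro n _
    by_cases hn : n = 0
    · simp [hn]
    · rw [if_pos hn]
      have herase : (univ.filter (fun m : ZMod p => m ≠ 0)).erase n
          = univ.filter (fun m : ZMod p => m ≠ 0 ∧ m ≠ n) := by
        ext m; simp [Finset.mem_erase, Finset.mem_filter, and_comm]
      rw [herase, Finset.sum_filter]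
      apply Finset.sum_congr rfl; intro m _
      by_cases hm : m ≠ 0 ∧ m ≠ n
      · rw [if_pos hm, if_pos ⟨hn, hm⟩]
      · rw [if_neg hm, if_neg (fun h => hm ⟨h.2.1, h.2.2⟩)]
  have rhs_eq : ∑ d ∈ univ.filter (fun d : ZMod p => d ≠ 0),
      ∑ m ∈ univ.filter (fun m : ZMod p => m ≠ 0 ∧ m + d ≠ 0), F (m+d) m
      = ∑ d : ZMod p, ∑ m : ZMod p, (if d ≠ 0 ∧ m ≠ 0 ∧ m + d ≠ 0 then F (m+d) m else 0) := by
    rw [Finset.sum_filter]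
    apply Finset.sum_congr rfl; intro d _
    by_cases hd : d = 0
    · simp [hd]
    · rw [if_pos hd, Finset.sum_filter]
      apply Finset.sum_congr rfl; intro m _
      by_cases hm : m ≠ 0 ∧ m + d ≠ 0
      · rw [if_pos hm, if_pos ⟨hd, hm⟩]
      · rw [if_neg hm, if_neg (fun h => hm ⟨h.2.1, h.2.2⟩)]
  rw [lhs_eq, rhs_eq, Finset.sum_comm]
  rw [show (∑ d : ZMod p, ∑ m : ZMod p, if d ≠ 0 ∧ m ≠ 0 ∧ m + d ≠ 0 then F (m+d) m else 0)
      = ∑ m : ZMod p, ∑ d : ZMod p, (if d ≠ 0 ∧ m ≠ 0 ∧ m + d ≠ 0 then F (m+d) m else 0)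
      from Finset.sum_comm]
  apply Finset.sum_congr rfl; intro m _
  refine Fintype.sum_equiv (Equiv.subRight m) _ _ ?_
  intro n
  simp only [Equiv.subRight_apply]
  rw [show m + (n - m) = n from by ring]
  refine if_congr ?_ rfl rfl
  constructor
  · rintro ⟨h1, h2, h3⟩
    exact ⟨sub_ne_zero.mpr (fun h => h3 h.symm), h2, h1⟩
  · rintro ⟨h1, h2, h3⟩
    exact ⟨h3, h2, fun h => h1 (by rw [← h, sub_self])⟩

lemma decomp (hp2 : p ≠ 2) (f₁ f₂ : ZMod p → ℂ) :
    ∑ s : ZMod p, (∑ n ∈ univ.filter (fun n : ZMod p => n ≠ 0), ft p f₁ (s - n) * ft p f₂ n * Kq p (s - n) n) *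
      (starRingEnd ℂ) (∑ n ∈ univ.filter (fun n : ZMod p => n ≠ 0), ft p f₁ (s - n) * ft p f₂ n * Kq p (s - n) n)
    = (∑ n ∈ univ.filter (fun n : ZMod p => n ≠ 0), ft p f₂ n * (starRingEnd ℂ) (ft p f₂ n)) *
        (∑ u : ZMod p, ft p f₁ u * (starRingEnd ℂ) (ft p f₁ u))
      + (1/(p:ℂ))^2 * ∑ d ∈ univ.filter (fun d : ZMod p => d ≠ 0),
          ep p (-(d*4⁻¹)) * ∑ w : ZMod p, Dd p f₁ d w * Md p (ft p f₂) d w := by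
  rw [step1 f₁ f₂]
  have split : ∀ n ∈ univ.filter (fun n : ZMod p => n ≠ 0),
      (∑ m ∈ univ.filter (fun m : ZMod p => m ≠ 0), (ft p f₂ n * (starRingEnd ℂ) (ft p f₂ m)) * Tq p f₁ n m)
      = (ft p f₂ n * (starRingEnd ℂ) (ft p f₂ n)) * (∑ u : ZMod p, ft p f₁ u * (starRingEnd ℂ) (ft p f₁ u))
        + ∑ m ∈ (univ.filter (fun m : ZMod p => m ≠ 0)).erase n,
            (ft p f₂ n * (starRingEnd ℂ) (ft p f₂ m)) * Tq p f₁ n m := by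
    intro n hn
    have hn0 : n ≠ 0 := (Finset.mem_filter.mp hn).2
    rw [← Finset.add_sum_erase _ _ hn, diag_eval f₁ hn0]
  rw [Finset.sum_congr rfl split, Finset.sum_add_distrib, ← Finset.sum_mul]
  congr 1
  rw [reindex_pairs]
  have inner : ∀ d ∈ univ.filter (fun d : ZMod p => d ≠ 0),
      (∑ m ∈ univ.filter (fun m : ZMod p => m ≠ 0 ∧ m + d ≠ 0),
        (ft p f₂ (m+d) * (starRingEnd ℂ) (ft p f₂ m)) * Tq p f₁ (m+d) m)
      = (1/(p:ℂ))^2 * (ep p (-(d*4⁻¹)) * ∑ w : ZMod p, Dd p f₁ d w * Md p (ft p f₂) d w) := by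
    intro d hd
    exact inner_d hp2 f₁ (ft p f₂) (Finset.mem_filter.mp hd).2
  rw [Finset.sum_congr rfl inner, ← Finset.mul_sum]

end assembly5

section analytic
variable {p : ℕ} [hp : Fact p.Prime]

lemma parseval_abs (F : ZMod p → ℂ) :
    ∑ d : ZMod p, (‖∑ x : ZMod p, F x * ep p (x*d)‖)^2
      = (p:ℝ) * ∑ x : ZMod p, (‖F x‖)^2 := by
  have h := parseval_c F
  simp_rw [Complex.mul_conj] at h
  have h2 : ((∑ d : ZMod p, Complex.normSq (∑ x : ZMod p, F x * ep p (x*d)) : ℝ) : ℂ)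
      = (((p:ℝ) * ∑ x : ZMod p, Complex.normSq (F x) : ℝ) : ℂ) := by
    push_cast
    rw [h]
  have h3 := Complex.ofReal_inj.mp h2
  simp_rw [Complex.sq_norm]
  exact h3

lemma parseval_ft (f : ZMod p → ℂ) :
    ∑ u : ZMod p, (‖ft p f u‖)^2 = (1/(p:ℝ)) * ∑ x : ZMod p, (‖f x‖)^2 := by
  have hrw : ∀ u : ZMod p, ft p f u = (1/(p:ℂ)) * ∑ x : ZMod p, (f (-x)) * ep p (x * u) := by
    intro u
    rw [ft]
    congr 1
    refine Fintype.sum_equiv (Equiv.neg (ZMod p)) _ _ ?_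
    intro x
    simp only [Equiv.neg_apply]
    rw [show -x * u = -(x * u) from by ring, neg_neg]
    ring
  simp_rw [hrw, norm_mul]
  have habs : ∀ u : ZMod p, (‖(1:ℂ)/(p:ℂ)‖)^2 * (‖∑ x : ZMod p, f (-x) * ep p (x*u)‖)^2
      = (1/(p:ℝ))^2 * (‖∑ x : ZMod p, f (-x) * ep p (x*u)‖)^2 := by
    intro u
    congr 2
    rw [norm_div, norm_one, Complex.norm_natCast]
  simp_rw [mul_pow, habs]
  rw [← Finset.mul_sum, parseval_abs (fun x => f (-x))]
  have : ∑ x : ZMod p, (‖f (-x)‖)^2 = ∑ x : ZMod p, (‖f x‖)^2 :=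
    Fintype.sum_equiv (Equiv.neg (ZMod p)) _ _ (fun x => by simp)
  rw [this]
  have hppos : (0:ℝ) < p := by
    have := hp.out.pos; positivity
  field_simp

end analytic

section estimates
variable {p : ℕ} [hp : Fact p.Prime]

lemma Dd_l2 (f₁ : ZMod p → ℂ) :
    ∑ d : ZMod p, ∑ w : ZMod p, (‖Dd p f₁ d w‖)^2
      = (p:ℝ) * (∑ x : ZMod p, (‖f₁ x‖)^2)^2 := by
  rw [Finset.sum_comm]
  have perw : ∀ w : ZMod p, ∑ d : ZMod p, (‖Dd p f₁ d w‖)^2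
      = (p:ℝ) * ∑ x : ZMod p, (‖f₁ x‖)^2 * (‖f₁ (x-w)‖)^2 := by
    intro w
    have := parseval_abs (fun x => f₁ x * (starRingEnd ℂ) (f₁ (x - w)))
    rw [show ∑ d : ZMod p, (‖Dd p f₁ d w‖)^2
        = ∑ d : ZMod p, (‖∑ x : ZMod p, (f₁ x * (starRingEnd ℂ) (f₁ (x - w))) * ep p (x*d)‖)^2
        from rfl, this]
    congr 1
    apply Finset.sum_congr rfl; intro x _
    rw [norm_mul, Complex.norm_conj, mul_pow]
  simp_rw [perw]
  rw [← Finset.mul_sum]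
  congr 1
  rw [Finset.sum_comm]
  rw [sq]
  rw [Finset.sum_mul]
  apply Finset.sum_congr rfl; intro x _
  rw [← Finset.mul_sum]
  congr 1
  exact Fintype.sum_equiv (Equiv.subLeft x) _ _ (fun w => rfl)

lemma Md_l2 (hp2 : p ≠ 2) (B : ZMod p → ℂ) {d : ZMod p} (hd : d ≠ 0) :
    ∑ w : ZMod p, (‖Md p B d w‖)^2
      ≤ (p:ℝ)^2 * (∑ m ∈ univ.filter (fun m : ZMod p => m ≠ 0 ∧ m + d ≠ 0),
            (‖B (m+d)‖ * ‖B m‖)^2)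
        + (p:ℝ) * Real.sqrt p *
            (∑ m ∈ univ.filter (fun m : ZMod p => m ≠ 0 ∧ m + d ≠ 0),
              ‖B (m+d)‖ * ‖B m‖)^2 := by
  classical
  set Q := univ.filter (fun m : ZMod p => m ≠ 0 ∧ m + d ≠ 0) with hQ
  set c : ZMod p → ℂ := fun m => B (m+d) * (starRingEnd ℂ) (B m) * gS p (d * (4*(m+d)*m)⁻¹) with hc
  set u : ZMod p → ZMod p := fun m => (m+d)*m*d⁻¹ with hu
  set I : ZMod p → ZMod p → ℂ := fun m m' => ∑ w : ZMod p, ep p ((w*m - w^2*(u m)) + -(w*m' - w^2*(u m'))) with hI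
  set rr : ZMod p → ℝ := fun m => ‖B (m+d)‖ * ‖B m‖ with hrr
  have h4 : (4 : ZMod p) ≠ 0 := four_ne_zero'' hp2
  -- expansion
  have expand : (∑ w : ZMod p, ((‖Md p B d w‖)^2 : ℂ)) = ∑ m ∈ Q, ∑ m' ∈ Q, c m * (starRingEnd ℂ) (c m') * I m m' := by
    have habs : ∀ w : ZMod p, ((‖Md p B d w‖)^2 : ℂ) = Md p B d w * (starRingEnd ℂ) (Md p B d w) := by
      intro w
      rw [Complex.mul_conj]
      norm_cast
      exact Complex.sq_norm _
    simp_rw [habs]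
    have hMd : ∀ w : ZMod p, Md p B d w * (starRingEnd ℂ) (Md p B d w)
        = ∑ m ∈ Q, ∑ m' ∈ Q, c m * (starRingEnd ℂ) (c m') * ep p ((w*m - w^2*(u m)) + -(w*m' - w^2*(u m'))) := by
      intro w
      rw [Md, map_sum, Finset.sum_mul_sum]
      apply Finset.sum_congr rfl; intro m _
      apply Finset.sum_congr rfl; intro m' _
      simp only [hc, map_mul, conj_ep]
      rw [ep_add]
      ring
    simp_rw [hMd]
    rw [Finset.sum_comm]
    apply Finset.sum_congr rfl; intro m _
    rw [Finset.sum_comm]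
    apply Finset.sum_congr rfl; intro m' _
    rw [← Finset.mul_sum, hI]
  -- bound on I
  have Ibound : ∀ m ∈ Q, ∀ m' ∈ Q, ‖I m m'‖ ≤ if m = m' then (p:ℝ) else Real.sqrt p := by
    intro m hm m' hm'
    by_cases heq : m = m'
    · subst heq
      rw [if_pos rfl, hI]
      simp only [add_neg_cancel, ep_zero]
      simp [ZMod.card]
    · rw [if_neg heq]
      by_cases hsum : m + m' + d = 0
      · -- I = 0
        have hu' : u m = u m' := by
          simp only [hu]
          have : m + d = -m' := by linear_combination hsum
          have : (m+d)*m - (m'+d)*m' = 0 := by linear_combination (m - m') * hsum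
          field_simp
          linear_combination this
        have : I m m' = ∑ w : ZMod p, ep p ((m - m') * w) := by
          rw [hI]
          apply Finset.sum_congr rfl; intro w _
          congr 1
          rw [hu']
          ring
        rw [this, sum_ep_mul_eq_zero (sub_ne_zero.mpr heq)]
        simp [Real.sqrt_nonneg]
      · -- Gauss
        have harg : ∀ w : ZMod p, ((w*m - w^2*(u m)) + -(w*m' - w^2*(u m')))
            = ((m'-m)*(m'+m+d)*d⁻¹)*w^2 + (m - m')*w := by
          intro w
          simp only [hu]
          field_simp
          ring
        have hq : (m'-m)*(m'+m+d)*d⁻¹ ≠ 0 := by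
          refine mul_ne_zero (mul_ne_zero (sub_ne_zero.mpr (Ne.symm heq)) ?_) (inv_ne_zero hd)
          intro h; exact hsum (by linear_combination h)
        have : I m m' = ∑ w : ZMod p, ep p (((m'-m)*(m'+m+d)*d⁻¹)*w^2 + (m - m')*w) := by
          rw [hI]; exact Finset.sum_congr rfl (fun w _ => by rw [harg])
        rw [this, abs_gauss hp2 _ hq]
  -- |c m| for m ∈ Q
  have cabs : ∀ m ∈ Q, ‖c m‖ = rr m * Real.sqrt p := by
    intro m hm
    obtain ⟨hm0, hmd⟩ := (Finset.mem_filter.mp hm).2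
    have hα : d * (4*(m+d)*m)⁻¹ ≠ 0 :=
      mul_ne_zero hd (inv_ne_zero (mul_ne_zero (mul_ne_zero h4 hmd) hm0))
    simp only [hc, map_mul, norm_mul, Complex.norm_conj, abs_gS hp2 hα, hrr]
  -- put together
  have step : ∑ w : ZMod p, (‖Md p B d w‖)^2
      ≤ ∑ m ∈ Q, ∑ m' ∈ Q, (rr m * Real.sqrt p) * (rr m' * Real.sqrt p) *
          (if m = m' then (p:ℝ) else Real.sqrt p) := by
    have : ∑ w : ZMod p, (‖Md p B d w‖)^2
        = ‖∑ m ∈ Q, ∑ m' ∈ Q, c m * (starRingEnd ℂ) (c m') * I m m'‖ := by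
      rw [← expand]
      rw [show (∑ w : ZMod p, ((‖Md p B d w‖)^2 : ℂ)) = ((∑ w : ZMod p, (‖Md p B d w‖)^2 : ℝ) : ℂ) from by push_cast; rfl]
      rw [Complex.norm_real, Real.norm_eq_abs, abs_of_nonneg (by positivity)]
    rw [this]
    calc ‖∑ m ∈ Q, ∑ m' ∈ Q, c m * (starRingEnd ℂ) (c m') * I m m'‖
        ≤ ∑ m ∈ Q, ‖∑ m' ∈ Q, c m * (starRingEnd ℂ) (c m') * I m m'‖ :=
          norm_sum_le _ _
      _ ≤ ∑ m ∈ Q, ∑ m' ∈ Q, ‖c m * (starRingEnd ℂ) (c m') * I m m'‖ :=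
          Finset.sum_le_sum (fun m _ => norm_sum_le _ _)
      _ ≤ ∑ m ∈ Q, ∑ m' ∈ Q, (rr m * Real.sqrt p) * (rr m' * Real.sqrt p) *
          (if m = m' then (p:ℝ) else Real.sqrt p) := by
          apply Finset.sum_le_sum; intro m hm
          apply Finset.sum_le_sum; intro m' hm'
          rw [norm_mul, norm_mul, Complex.norm_conj, cabs m hm, cabs m' hm']
          exact mul_le_mul_of_nonneg_left (Ibound m hm m' hm') (by positivity)
  refine step.trans ?_
  -- split diag/offdiag
  have split : ∑ m ∈ Q, ∑ m' ∈ Q, (rr m * Real.sqrt p) * (rr m' * Real.sqrt p) *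
      (if m = m' then (p:ℝ) else Real.sqrt p)
      ≤ ∑ m ∈ Q, (p:ℝ)^2 * (rr m)^2 + ∑ m ∈ Q, ∑ m' ∈ Q, (p:ℝ) * Real.sqrt p * (rr m * rr m') := by
    rw [← Finset.sum_add_distrib]
    apply Finset.sum_le_sum; intro m hm
    rw [← Finset.add_sum_erase _ _ hm, if_pos rfl]
    have hsq : Real.sqrt p ^ 2 = (p:ℝ) := Real.sq_sqrt (by positivity)
    refine add_le_add (le_of_eq ?_) ?_
    · have h2 : Real.sqrt p * Real.sqrt p = (p:ℝ) := Real.mul_self_sqrt (by positivity)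
      calc rr m * Real.sqrt p * (rr m * Real.sqrt p) * (p:ℝ)
          = (Real.sqrt p * Real.sqrt p) * (rr m * rr m * (p:ℝ)) := by ring
        _ = (p:ℝ)^2 * (rr m)^2 := by rw [h2]; ring
    · calc ∑ m' ∈ Q.erase m, rr m * Real.sqrt p * (rr m' * Real.sqrt p) *
            (if m = m' then (p:ℝ) else Real.sqrt p)
          = ∑ m' ∈ Q.erase m, (p:ℝ) * Real.sqrt p * (rr m * rr m') := by
            apply Finset.sum_congr rfl; intro m' hm'
            rw [if_neg (fun h => (Finset.mem_erase.mp hm').1 h.symm)]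
            rw [show rr m * Real.sqrt p * (rr m' * Real.sqrt p) * Real.sqrt p
                = (Real.sqrt p ^ 2) * Real.sqrt p * (rr m * rr m') from by ring, hsq]
        _ ≤ ∑ m' ∈ Q, (p:ℝ) * Real.sqrt p * (rr m * rr m') := by
            apply Finset.sum_le_sum_of_subset_of_nonneg (Finset.erase_subset _ _)
            intro m' _ _
            have : (0:ℝ) ≤ rr m := by positivity
            have : (0:ℝ) ≤ rr m' := by positivity
            positivity
  refine split.trans ?_
  refine add_le_add (le_of_eq (Finset.mul_sum _ _ _).symm) (le_of_eq (Eq.symm ?_))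
  rw [sq, Finset.sum_mul_sum, Finset.mul_sum]
  apply Finset.sum_congr rfl; intro m _
  rw [Finset.mul_sum]

end estimates

section estimates2
variable {p : ℕ} [hp : Fact p.Prime]

lemma shift_sum (r : ZMod p → ℝ) (m : ZMod p) : ∑ d : ZMod p, r (m + d) = ∑ n : ZMod p, r n :=
  Fintype.sum_equiv (Equiv.addLeft m) _ _ (fun d => rfl)

lemma Md_total (hp2 : p ≠ 2) (B : ZMod p → ℂ) :
    ∑ d ∈ univ.filter (fun d : ZMod p => d ≠ 0), ∑ w : ZMod p, (‖Md p B d w‖)^2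
      ≤ ((p:ℝ)^2 + (p:ℝ)^2 * Real.sqrt p) * (∑ n : ZMod p, (‖B n‖)^2)^2 := by
  classical
  set r : ZMod p → ℝ := fun n => ‖B n‖ with hr
  set NB : ℝ := ∑ n : ZMod p, (r n)^2 with hNB
  have hrpos : ∀ n, 0 ≤ r n := fun n => norm_nonneg _
  have hNBpos : 0 ≤ NB := Finset.sum_nonneg (fun n _ => by positivity)
  have step1 : ∑ d ∈ univ.filter (fun d : ZMod p => d ≠ 0), ∑ w : ZMod p, (‖Md p B d w‖)^2
      ≤ ∑ d ∈ univ.filter (fun d : ZMod p => d ≠ 0),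
          ((p:ℝ)^2 * (∑ m ∈ univ.filter (fun m : ZMod p => m ≠ 0 ∧ m + d ≠ 0), (r (m+d) * r m)^2)
            + (p:ℝ) * Real.sqrt p * (∑ m ∈ univ.filter (fun m : ZMod p => m ≠ 0 ∧ m + d ≠ 0), r (m+d) * r m)^2) := by
    apply Finset.sum_le_sum
    intro d hd
    exact Md_l2 hp2 B (Finset.mem_filter.mp hd).2
  refine step1.trans ?_
  rw [Finset.sum_add_distrib]
  have part1 : ∑ d ∈ univ.filter (fun d : ZMod p => d ≠ 0),
      (p:ℝ)^2 * (∑ m ∈ univ.filter (fun m : ZMod p => m ≠ 0 ∧ m + d ≠ 0), (r (m+d) * r m)^2)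
      ≤ (p:ℝ)^2 * NB^2 := by
    have h1 : ∀ d : ZMod p, (∑ m ∈ univ.filter (fun m : ZMod p => m ≠ 0 ∧ m + d ≠ 0), (r (m+d) * r m)^2)
        ≤ ∑ m : ZMod p, (r (m+d) * r m)^2 := by
      intro d
      apply Finset.sum_le_sum_of_subset_of_nonneg (Finset.filter_subset _ _)
      intro m _ _; positivity
    have h2 : ∑ d ∈ univ.filter (fun d : ZMod p => d ≠ 0),
        (p:ℝ)^2 * (∑ m ∈ univ.filter (fun m : ZMod p => m ≠ 0 ∧ m + d ≠ 0), (r (m+d) * r m)^2)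
        ≤ ∑ d : ZMod p, (p:ℝ)^2 * ∑ m : ZMod p, (r (m+d) * r m)^2 := by
      apply (Finset.sum_le_sum_of_subset_of_nonneg (Finset.filter_subset _ _) ?_).trans ?_
      · intro d _ _
        have := h1 d
        positivity
      · apply Finset.sum_le_sum; intro d _
        exact mul_le_mul_of_nonneg_left (h1 d) (by positivity)
    refine h2.trans ?_
    rw [← Finset.mul_sum]
    apply mul_le_mul_of_nonneg_left ?_ (by positivity)
    rw [Finset.sum_comm]
    have : ∀ m : ZMod p, ∑ d : ZMod p, (r (m+d) * r m)^2 = (r m)^2 * NB := by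
      intro m
      rw [show (fun d => (r (m+d) * r m)^2) = (fun d => (r m)^2 * (r (m+d))^2) from funext (fun d => by ring)]
      rw [← Finset.mul_sum, shift_sum (fun n => (r n)^2) m]
    simp_rw [this]
    rw [← Finset.sum_mul]
    exact le_of_eq (by rw [hNB, sq])
  have part2 : ∑ d ∈ univ.filter (fun d : ZMod p => d ≠ 0),
      (p:ℝ) * Real.sqrt p * (∑ m ∈ univ.filter (fun m : ZMod p => m ≠ 0 ∧ m + d ≠ 0), r (m+d) * r m)^2
      ≤ (p:ℝ)^2 * Real.sqrt p * NB^2 := by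
    have h1 : ∀ d : ZMod p, (∑ m ∈ univ.filter (fun m : ZMod p => m ≠ 0 ∧ m + d ≠ 0), r (m+d) * r m)^2
        ≤ (∑ m : ZMod p, r (m+d) * r m)^2 := by
      intro d
      have hle : (∑ m ∈ univ.filter (fun m : ZMod p => m ≠ 0 ∧ m + d ≠ 0), r (m+d) * r m)
          ≤ ∑ m : ZMod p, r (m+d) * r m := by
        apply Finset.sum_le_sum_of_subset_of_nonneg (Finset.filter_subset _ _)
        intro m _ _; positivity
      have hnn : (0:ℝ) ≤ ∑ m ∈ univ.filter (fun m : ZMod p => m ≠ 0 ∧ m + d ≠ 0), r (m+d) * r m :=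
        Finset.sum_nonneg (fun m _ => by positivity)
      exact pow_le_pow_left₀ hnn hle 2
    have hinner : ∀ d : ZMod p, (∑ m : ZMod p, r (m+d) * r m)^2 ≤ ∑ m : ZMod p, ∑ m' : ZMod p,
        r m * r m' * (r (m+d) * r (m'+d)) := by
      intro d
      rw [sq, Finset.sum_mul_sum]
      apply le_of_eq
      apply Finset.sum_congr rfl; intro m _
      apply Finset.sum_congr rfl; intro m' _
      ring
    have key : ∑ d : ZMod p, (∑ m : ZMod p, r (m+d) * r m)^2 ≤ (p:ℝ) * NB^2 := by
      have swap : ∑ d : ZMod p, (∑ m : ZMod p, r (m+d) * r m)^2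
          ≤ ∑ m : ZMod p, ∑ m' : ZMod p, r m * r m' * (∑ d : ZMod p, r (m+d) * r (m'+d)) := by
        calc ∑ d : ZMod p, (∑ m : ZMod p, r (m+d) * r m)^2
            ≤ ∑ d : ZMod p, ∑ m : ZMod p, ∑ m' : ZMod p, r m * r m' * (r (m+d) * r (m'+d)) :=
              Finset.sum_le_sum (fun d _ => hinner d)
          _ = ∑ m : ZMod p, ∑ m' : ZMod p, r m * r m' * (∑ d : ZMod p, r (m+d) * r (m'+d)) := by
              rw [Finset.sum_comm]
              apply Finset.sum_congr rfl; intro m _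
              rw [Finset.sum_comm]
              apply Finset.sum_congr rfl; intro m' _
              rw [← Finset.mul_sum]
      refine swap.trans ?_
      have hcs : ∀ m m' : ZMod p, ∑ d : ZMod p, r (m+d) * r (m'+d) ≤ NB := by
        intro m m'
        have := Finset.sum_mul_sq_le_sq_mul_sq univ (fun d => r (m+d)) (fun d => r (m'+d))
        rw [shift_sum (fun n => (r n)^2) m, shift_sum (fun n => (r n)^2) m'] at this
        have hnn : (0:ℝ) ≤ ∑ d : ZMod p, r (m+d) * r (m'+d) :=
          Finset.sum_nonneg (fun d _ => by positivity)
        nlinarith [this, hnn, hNBpos]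
      calc ∑ m : ZMod p, ∑ m' : ZMod p, r m * r m' * (∑ d : ZMod p, r (m+d) * r (m'+d))
          ≤ ∑ m : ZMod p, ∑ m' : ZMod p, r m * r m' * NB := by
            apply Finset.sum_le_sum; intro m _
            apply Finset.sum_le_sum; intro m' _
            exact mul_le_mul_of_nonneg_left (hcs m m') (by positivity)
        _ = (∑ m : ZMod p, r m)^2 * NB := by
            rw [sq, Finset.sum_mul_sum, Finset.sum_mul]
            apply Finset.sum_congr rfl; intro m _
            rw [Finset.sum_mul]
        _ ≤ ((p:ℝ) * NB) * NB := by
            apply mul_le_mul_of_nonneg_right ?_ hNBpos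
            have := Finset.sum_mul_sq_le_sq_mul_sq univ r (fun _ => (1:ℝ))
            simp only [mul_one, one_pow] at this
            rw [Finset.sum_const, Finset.card_univ, ZMod.card] at this
            calc (∑ m : ZMod p, r m)^2 ≤ NB * ((p:ℕ) • (1:ℝ)) := this
              _ = (p:ℝ) * NB := by simp [mul_comm]
        _ = (p:ℝ) * NB^2 := by ring
    calc ∑ d ∈ univ.filter (fun d : ZMod p => d ≠ 0),
        (p:ℝ) * Real.sqrt p * (∑ m ∈ univ.filter (fun m : ZMod p => m ≠ 0 ∧ m + d ≠ 0), r (m+d) * r m)^2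
        ≤ ∑ d : ZMod p, (p:ℝ) * Real.sqrt p * (∑ m : ZMod p, r (m+d) * r m)^2 := by
          apply (Finset.sum_le_sum_of_subset_of_nonneg (Finset.filter_subset _ _) ?_).trans ?_
          · intro d _ _; positivity
          · apply Finset.sum_le_sum; intro d _
            exact mul_le_mul_of_nonneg_left (h1 d) (by positivity)
      _ = (p:ℝ) * Real.sqrt p * ∑ d : ZMod p, (∑ m : ZMod p, r (m+d) * r m)^2 := by
          rw [Finset.mul_sum]
      _ ≤ (p:ℝ) * Real.sqrt p * ((p:ℝ) * NB^2) :=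
          mul_le_mul_of_nonneg_left key (by positivity)
      _ = (p:ℝ)^2 * Real.sqrt p * NB^2 := by ring
  calc _ ≤ (p:ℝ)^2 * NB^2 + (p:ℝ)^2 * Real.sqrt p * NB^2 := add_le_add part1 part2
    _ = ((p:ℝ)^2 + (p:ℝ)^2 * Real.sqrt p) * NB^2 := by ring

end estimates2

section mainsec
variable {p : ℕ} [hp : Fact p.Prime]

lemma numeric_bound (hp2 : 2 ≤ p) :
    1 + Real.sqrt p * Real.sqrt (1 + Real.sqrt p) ≤ 4 * (p:ℝ)^((4:ℝ)/5) := by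
  have hP1 : (1:ℝ) ≤ (p:ℝ) := by exact_mod_cast Nat.one_le_of_lt hp2
  have hPpos : (0:ℝ) < (p:ℝ) := by linarith
  have hs1 : (1:ℝ) ≤ Real.sqrt p := by
    rw [show (1:ℝ) = Real.sqrt 1 from (Real.sqrt_one).symm]
    exact Real.sqrt_le_sqrt hP1
  have h1 : Real.sqrt (1 + Real.sqrt p) ≤ Real.sqrt 2 * Real.sqrt (Real.sqrt p) := by
    rw [← Real.sqrt_mul (by norm_num)]
    apply Real.sqrt_le_sqrt
    linarith
  have h2 : Real.sqrt p * (Real.sqrt 2 * Real.sqrt (Real.sqrt p))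
      = Real.sqrt 2 * ((p:ℝ)^((1:ℝ)/2) * ((p:ℝ)^((1:ℝ)/2))^((1:ℝ)/2)) := by
    rw [Real.sqrt_eq_rpow, Real.sqrt_eq_rpow ((p:ℝ)^((1:ℝ)/2))]
    ring
  have h3 : (p:ℝ)^((1:ℝ)/2) * ((p:ℝ)^((1:ℝ)/2))^((1:ℝ)/2) = (p:ℝ)^((3:ℝ)/4) := by
    rw [← Real.rpow_mul (le_of_lt hPpos), ← Real.rpow_add hPpos]
    norm_num
  have h4 : (p:ℝ)^((3:ℝ)/4) ≤ (p:ℝ)^((4:ℝ)/5) :=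
    Real.rpow_le_rpow_of_exponent_le hP1 (by norm_num)
  have h5 : (1:ℝ) ≤ (p:ℝ)^((4:ℝ)/5) := Real.one_le_rpow hP1 (by norm_num)
  have hsqrt2 : Real.sqrt 2 ≤ 2 := by
    nlinarith [Real.sq_sqrt (show (0:ℝ) ≤ 2 by norm_num), Real.sqrt_nonneg 2]
  have hchain : Real.sqrt p * Real.sqrt (1 + Real.sqrt p) ≤ 2 * (p:ℝ)^((4:ℝ)/5) := by
    calc Real.sqrt p * Real.sqrt (1 + Real.sqrt p)
        ≤ Real.sqrt p * (Real.sqrt 2 * Real.sqrt (Real.sqrt p)) :=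
          mul_le_mul_of_nonneg_left h1 (Real.sqrt_nonneg _)
      _ = Real.sqrt 2 * ((p:ℝ)^((1:ℝ)/2) * ((p:ℝ)^((1:ℝ)/2))^((1:ℝ)/2)) := h2
      _ = Real.sqrt 2 * (p:ℝ)^((3:ℝ)/4) := by rw [h3]
      _ ≤ 2 * (p:ℝ)^((4:ℝ)/5) := by
          apply mul_le_mul hsqrt2 h4 (Real.rpow_nonneg (le_of_lt hPpos) _) (by norm_num)
  linarith

lemma main_ineq (hp2 : p ≠ 2) (f₁ f₂ : ZMod p → ℂ) :
    ∑ s : ZMod p, ‖∑ n ∈ Finset.univ.filter (fun n : ZMod p => n ≠ 0),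
        ft p f₁ (s - n) * ft p f₂ n * Kq p (s - n) n‖ ^ 2
      ≤ 4 * (p:ℝ)^((4:ℝ)/5) * ((1/(p:ℝ)) * ∑ x : ZMod p, ‖f₁ x‖^2)
          * ((1/(p:ℝ)) * ∑ x : ZMod p, ‖f₂ x‖^2) := by
  classical
  have hppos : (0:ℝ) < p := by have := hp.out.pos; positivity
  set g : ZMod p → ℂ := fun s => ∑ n ∈ Finset.univ.filter (fun n : ZMod p => n ≠ 0),
      ft p f₁ (s - n) * ft p f₂ n * Kq p (s - n) n with hg
  set S : ℝ := ∑ s : ZMod p, ‖g s‖ ^ 2 with hS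
  set NA' : ℝ := ∑ u : ZMod p, ‖ft p f₁ u‖^2 with hNA
  set NB' : ℝ := ∑ n ∈ Finset.univ.filter (fun n : ZMod p => n ≠ 0), ‖ft p f₂ n‖^2 with hNB'
  set NB : ℝ := ∑ n : ZMod p, ‖ft p f₂ n‖^2 with hNBdef
  set Na : ℝ := ∑ x : ZMod p, ‖f₁ x‖^2 with hNa
  set offC : ℂ := (1/(p:ℂ))^2 * ∑ d ∈ univ.filter (fun d : ZMod p => d ≠ 0),
      ep p (-(d*4⁻¹)) * ∑ w : ZMod p, Dd p f₁ d w * Md p (ft p f₂) d w with hoffC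
  -- cast identity
  have hcast : ((S : ℝ) : ℂ) = ∑ s : ZMod p, g s * (starRingEnd ℂ) (g s) := by
    rw [hS]
    push_cast
    apply Finset.sum_congr rfl; intro s _
    rw [Complex.mul_conj]
    norm_cast
    exact Complex.sq_norm _
  have hdiagC : (∑ n ∈ univ.filter (fun n : ZMod p => n ≠ 0), ft p f₂ n * (starRingEnd ℂ) (ft p f₂ n)) *
      (∑ u : ZMod p, ft p f₁ u * (starRingEnd ℂ) (ft p f₁ u)) = ((NB' * NA' : ℝ) : ℂ) := by
    have e1 : ∀ z : ℂ, z * (starRingEnd ℂ) z = ((‖z‖ ^2 : ℝ) : ℂ) := by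
      intro z; rw [Complex.mul_conj]; norm_cast; exact (Complex.sq_norm _).symm
    simp_rw [e1]
    rw [hNB', hNA]
    push_cast
    ring
  have hdec : ((S : ℝ) : ℂ) = ((NB' * NA' : ℝ) : ℂ) + offC := by
    rw [hcast, decomp hp2 f₁ f₂, hdiagC, hoffC]
  have hoff_eq : offC = (((S - NB' * NA' : ℝ)) : ℂ) := by
    rw [Complex.ofReal_sub, hdec]
    ring
  -- bound abs offC
  have habs_off : ‖offC‖ ≤ (1/(p:ℝ))^2 *
      ∑ d ∈ univ.filter (fun d : ZMod p => d ≠ 0), ∑ w : ZMod p,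
        ‖Dd p f₁ d w‖ * ‖Md p (ft p f₂) d w‖ := by
    rw [hoffC, norm_mul]
    have e1 : ‖(1/(p:ℂ))^2‖ = (1/(p:ℝ))^2 := by
      rw [norm_pow, norm_div, norm_one, Complex.norm_natCast]
    rw [e1]
    apply mul_le_mul_of_nonneg_left ?_ (by positivity)
    calc ‖∑ d ∈ univ.filter (fun d : ZMod p => d ≠ 0),
          ep p (-(d*4⁻¹)) * ∑ w : ZMod p, Dd p f₁ d w * Md p (ft p f₂) d w‖
        ≤ ∑ d ∈ univ.filter (fun d : ZMod p => d ≠ 0),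
            ‖ep p (-(d*4⁻¹)) * ∑ w : ZMod p, Dd p f₁ d w * Md p (ft p f₂) d w‖ :=
          norm_sum_le _ _
      _ ≤ ∑ d ∈ univ.filter (fun d : ZMod p => d ≠ 0), ∑ w : ZMod p,
            ‖Dd p f₁ d w‖ * ‖Md p (ft p f₂) d w‖ := by
          apply Finset.sum_le_sum; intro d _
          rw [norm_mul, abs_ep, one_mul]
          calc ‖∑ w : ZMod p, Dd p f₁ d w * Md p (ft p f₂) d w‖
              ≤ ∑ w : ZMod p, ‖Dd p f₁ d w * Md p (ft p f₂) d w‖ :=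
                norm_sum_le _ _
            _ = ∑ w : ZMod p, ‖Dd p f₁ d w‖ * ‖Md p (ft p f₂) d w‖ := by
                apply Finset.sum_congr rfl; intro w _; rw [norm_mul]
  -- Cauchy-Schwarz
  have hCS : (∑ d ∈ univ.filter (fun d : ZMod p => d ≠ 0), ∑ w : ZMod p,
        ‖Dd p f₁ d w‖ * ‖Md p (ft p f₂) d w‖)^2
      ≤ ((p:ℝ) * Na^2) * (((p:ℝ)^2 + (p:ℝ)^2 * Real.sqrt p) * NB^2) := by
    have hprod : ∑ d ∈ univ.filter (fun d : ZMod p => d ≠ 0), ∑ w : ZMod p,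
          ‖Dd p f₁ d w‖ * ‖Md p (ft p f₂) d w‖
        = ∑ q ∈ (univ.filter (fun d : ZMod p => d ≠ 0)) ×ˢ (univ : Finset (ZMod p)),
            ‖Dd p f₁ q.1 q.2‖ * ‖Md p (ft p f₂) q.1 q.2‖ := by
      rw [Finset.sum_product]
    rw [hprod]
    calc (∑ q ∈ (univ.filter (fun d : ZMod p => d ≠ 0)) ×ˢ (univ : Finset (ZMod p)),
          ‖Dd p f₁ q.1 q.2‖ * ‖Md p (ft p f₂) q.1 q.2‖)^2
        ≤ (∑ q ∈ (univ.filter (fun d : ZMod p => d ≠ 0)) ×ˢ (univ : Finset (ZMod p)),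
            ‖Dd p f₁ q.1 q.2‖^2) *
          (∑ q ∈ (univ.filter (fun d : ZMod p => d ≠ 0)) ×ˢ (univ : Finset (ZMod p)),
            ‖Md p (ft p f₂) q.1 q.2‖^2) :=
          Finset.sum_mul_sq_le_sq_mul_sq _ _ _
      _ ≤ ((p:ℝ) * Na^2) * (((p:ℝ)^2 + (p:ℝ)^2 * Real.sqrt p) * NB^2) := by
          apply mul_le_mul
          · rw [Finset.sum_product]
            calc ∑ d ∈ univ.filter (fun d : ZMod p => d ≠ 0), ∑ w : ZMod p, ‖Dd p f₁ d w‖^2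
                ≤ ∑ d : ZMod p, ∑ w : ZMod p, ‖Dd p f₁ d w‖^2 := by
                  apply Finset.sum_le_sum_of_subset_of_nonneg (Finset.filter_subset _ _)
                  intro d _ _
                  apply Finset.sum_nonneg; intro w _; positivity
              _ = (p:ℝ) * Na^2 := Dd_l2 f₁
          · rw [Finset.sum_product]
            exact Md_total hp2 (ft p f₂)
          · apply Finset.sum_nonneg; intro q _; positivity
          · positivity
  -- combine
  have hsqrt_bound : ∑ d ∈ univ.filter (fun d : ZMod p => d ≠ 0), ∑ w : ZMod p,
        ‖Dd p f₁ d w‖ * ‖Md p (ft p f₂) d w‖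
      ≤ (Real.sqrt p * Na) * (((p:ℝ) * Real.sqrt (1 + Real.sqrt p)) * NB) := by
    have hnnL : (0:ℝ) ≤ ∑ d ∈ univ.filter (fun d : ZMod p => d ≠ 0), ∑ w : ZMod p,
        ‖Dd p f₁ d w‖ * ‖Md p (ft p f₂) d w‖ := by
      apply Finset.sum_nonneg; intro d _
      apply Finset.sum_nonneg; intro w _; positivity
    have hNa_nn : (0:ℝ) ≤ Na := Finset.sum_nonneg (fun x _ => by positivity)
    have hNB_nn : (0:ℝ) ≤ NB := Finset.sum_nonneg (fun x _ => by positivity)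
    have hrhs_eq : (((p:ℝ) * Na^2) * (((p:ℝ)^2 + (p:ℝ)^2 * Real.sqrt p) * NB^2))
        = ((Real.sqrt p * Na) * (((p:ℝ) * Real.sqrt (1 + Real.sqrt p)) * NB))^2 := by
      have e1 : Real.sqrt p ^ 2 = (p:ℝ) := Real.sq_sqrt (le_of_lt hppos)
      have e2 : Real.sqrt (1 + Real.sqrt p) ^ 2 = 1 + Real.sqrt p :=
        Real.sq_sqrt (by positivity)
      calc ((p:ℝ) * Na^2) * (((p:ℝ)^2 + (p:ℝ)^2 * Real.sqrt p) * NB^2)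
          = ((p:ℝ) * Na^2) * ((p:ℝ)^2 * (1 + Real.sqrt p) * NB^2) := by ring
        _ = (Real.sqrt p ^2 * Na^2) * ((p:ℝ)^2 * (Real.sqrt (1 + Real.sqrt p))^2 * NB^2) := by
            rw [e1, e2]
        _ = ((Real.sqrt p * Na) * (((p:ℝ) * Real.sqrt (1 + Real.sqrt p)) * NB))^2 := by ring
    nlinarith [hCS, hnnL, hrhs_eq, Real.sqrt_nonneg (p:ℝ), Real.sqrt_nonneg (1 + Real.sqrt p),
      mul_nonneg (mul_nonneg (Real.sqrt_nonneg (p:ℝ)) hNa_nn)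
        (mul_nonneg (mul_nonneg (le_of_lt hppos) (Real.sqrt_nonneg (1 + Real.sqrt p))) hNB_nn)]
  -- final assembly
  have hoff_final : ‖offC‖ ≤ Real.sqrt p * Real.sqrt (1 + Real.sqrt p) * ((Na / p) * NB) := by
    refine habs_off.trans ?_
    calc (1/(p:ℝ))^2 * ∑ d ∈ univ.filter (fun d : ZMod p => d ≠ 0), ∑ w : ZMod p,
          ‖Dd p f₁ d w‖ * ‖Md p (ft p f₂) d w‖
        ≤ (1/(p:ℝ))^2 * ((Real.sqrt p * Na) * (((p:ℝ) * Real.sqrt (1 + Real.sqrt p)) * NB)) :=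
          mul_le_mul_of_nonneg_left hsqrt_bound (by positivity)
      _ = Real.sqrt p * Real.sqrt (1 + Real.sqrt p) * ((Na / p) * NB) := by
          field_simp
  have hS_bound : S ≤ NB' * NA' + Real.sqrt p * Real.sqrt (1 + Real.sqrt p) * ((Na / p) * NB) := by
    have h1 : S - NB' * NA' ≤ ‖offC‖ := by
      rw [hoff_eq, Complex.norm_real, Real.norm_eq_abs]
      exact le_abs_self _
    linarith
  -- identify norms
  have hNA_eq : NA' = (1/(p:ℝ)) * Na := parseval_ft f₁
  have hNB_eq : NB = (1/(p:ℝ)) * ∑ x : ZMod p, ‖f₂ x‖^2 := parseval_ft f₂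
  have hNB'_le : NB' ≤ NB := by
    apply Finset.sum_le_sum_of_subset_of_nonneg (Finset.filter_subset _ _)
    intro n _ _; positivity
  have hNa_nn : (0:ℝ) ≤ Na := Finset.sum_nonneg (fun x _ => by positivity)
  have hNB_nn : (0:ℝ) ≤ NB := Finset.sum_nonneg (fun x _ => by positivity)
  have hNA_nn : (0:ℝ) ≤ NA' := Finset.sum_nonneg (fun x _ => by positivity)
  have hfinal : S ≤ (1 + Real.sqrt p * Real.sqrt (1 + Real.sqrt p)) * (((1/(p:ℝ)) * Na) * NB) := by
    have e1 : NB' * NA' ≤ NB * ((1/(p:ℝ)) * Na) := by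
      rw [← hNA_eq]
      exact mul_le_mul_of_nonneg_right hNB'_le hNA_nn
    have e2 : Na / p = (1/(p:ℝ)) * Na := by ring
    rw [e2] at hS_bound
    calc S ≤ NB' * NA' + Real.sqrt p * Real.sqrt (1 + Real.sqrt p) * (((1/(p:ℝ)) * Na) * NB) := hS_bound
      _ ≤ NB * ((1/(p:ℝ)) * Na) + Real.sqrt p * Real.sqrt (1 + Real.sqrt p) * (((1/(p:ℝ)) * Na) * NB) := by
          linarith
      _ = (1 + Real.sqrt p * Real.sqrt (1 + Real.sqrt p)) * (((1/(p:ℝ)) * Na) * NB) := by ring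
  have hnum := numeric_bound (p := p) hp.out.two_le
  calc S ≤ (1 + Real.sqrt p * Real.sqrt (1 + Real.sqrt p)) * (((1/(p:ℝ)) * Na) * NB) := hfinal
    _ ≤ (4 * (p:ℝ)^((4:ℝ)/5)) * (((1/(p:ℝ)) * Na) * NB) := by
        apply mul_le_mul_of_nonneg_right hnum
        positivity
    _ = 4 * (p:ℝ)^((4:ℝ)/5) * ((1/(p:ℝ)) * Na) * ((1/(p:ℝ)) * ∑ x : ZMod p, ‖f₂ x‖^2) := by
        rw [← hNB_eq]; ring

end mainsec


set_option maxHeartbeats 2000000 in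
theorem stmt9 : ∃ c : ℝ, 0 < c ∧ ∀ (p : ℕ) [NeZero p], p.Prime → p ≠ 2 →
    ∀ f₁ f₂ : ZMod p → ℂ,
    (∑ s : ZMod p, ‖∑ n ∈ Finset.univ.filter (fun n : ZMod p => n ≠ 0),
        ft p f₁ (s - n) * ft p f₂ n * Kq p (s - n) n‖ ^ 2) ^ ((1 : ℝ) / 2) ≤
      c * (p : ℝ) ^ ((2 : ℝ) / 5) * nrm2 p f₁ * nrm2 p f₂ := by
  refine ⟨2, by norm_num, ?_⟩
  intro p _ hprime hp2 f₁ f₂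
  haveI : Fact p.Prime := ⟨hprime⟩
  have hppos : (0:ℝ) < p := by have := hprime.pos; positivity
  have hmain := main_ineq (p := p) hp2 f₁ f₂
  have hn1 : (nrm2 p f₁)^2 = (1/(p:ℝ)) * ∑ x : ZMod p, ‖f₁ x‖^2 := by
    rw [nrm2]
    apply Real.sq_sqrt
    positivity
  have hn2 : (nrm2 p f₂)^2 = (1/(p:ℝ)) * ∑ x : ZMod p, ‖f₂ x‖^2 := by
    rw [nrm2]
    apply Real.sq_sqrt
    positivity
  set Z : ℝ := 2 * (p:ℝ)^((2:ℝ)/5) * nrm2 p f₁ * nrm2 p f₂ with hZ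
  have hZnn : 0 ≤ Z :=
    mul_nonneg (mul_nonneg (mul_nonneg (by norm_num)
      (Real.rpow_nonneg (le_of_lt hppos) _)) (Real.sqrt_nonneg _)) (Real.sqrt_nonneg _)
  have hsq : Z^2 = 4 * (p:ℝ)^((4:ℝ)/5) * ((1/(p:ℝ)) * ∑ x : ZMod p, ‖f₁ x‖^2)
      * ((1/(p:ℝ)) * ∑ x : ZMod p, ‖f₂ x‖^2) := by
    rw [← hn1, ← hn2, hZ]
    have e1 : ((p:ℝ)^((2:ℝ)/5))^2 = (p:ℝ)^((4:ℝ)/5) := by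
      rw [← Real.rpow_natCast ((p:ℝ)^((2:ℝ)/5)) 2, ← Real.rpow_mul (le_of_lt hppos)]
      norm_num
    rw [← e1]
    ring
  have hle : ∑ s : ZMod p, ‖∑ n ∈ Finset.univ.filter (fun n : ZMod p => n ≠ 0),
      ft p f₁ (s - n) * ft p f₂ n * Kq p (s - n) n‖ ^ 2 ≤ Z^2 := by
    rw [hsq]
    exact hmain
  have hS_nonneg : 0 ≤ ∑ s : ZMod p, ‖∑ n ∈ Finset.univ.filter (fun n : ZMod p => n ≠ 0),
      ft p f₁ (s - n) * ft p f₂ n * Kq p (s - n) n‖ ^ 2 :=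
    Finset.sum_nonneg (fun s _ => by positivity)
  calc (∑ s : ZMod p, ‖∑ n ∈ Finset.univ.filter (fun n : ZMod p => n ≠ 0),
        ft p f₁ (s - n) * ft p f₂ n * Kq p (s - n) n‖ ^ 2) ^ ((1 : ℝ) / 2)
      ≤ (Z^2) ^ ((1:ℝ)/2) := Real.rpow_le_rpow hS_nonneg hle (by norm_num)
    _ = Z := by
        rw [← Real.rpow_natCast Z 2, ← Real.rpow_mul hZnn]
        norm_num
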